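/- arXiv:1012.2948 — 2 statements merged into one kernel-verified Lean document; each statement's English description precedes it below -/
import Mathlib

section
/- (Jensen's maximum principle) Let n ≥ 1, let φ : ℝ^n → ℝ be semiconvex with constant C ≥ 0, let x₀ ∈ ℝ^n and ρ > 0, and assume x₀ is a strict maximum of φ over the closed ball B̄(x₀, ρ), i.e. φ(x) < φ(x₀) for all x ∈ B̄(x₀, ρ) with x ≠ x₀. Then for every δ > 0 the set K_δ = { x ∈ B(x₀, ρ) : there exists p ∈ ℝ^n with |p| ≤ δ such that y ↦ φ(y) + ⟨p, y⟩ attains its maximum over B̄(x₀, ρ) at x } has positive Lebesgue measure. -/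
open scoped RealInnerProductSpace Topology
open Filter Asymptotics Metric MeasureTheory

noncomputable section

/-- Euclidean space ℝ^n. -/
abbrev E (n : ℕ) : Type := EuclideanSpace ℝ (Fin n)

lemma real_le_of_forall_pos_le_add' {a b : ℝ} (h : ∀ ε, 0 < ε → a ≤ b + ε) : a ≤ b := by
  by_contra hc
  push_neg at hc
  have := h ((a - b) / 2) (by linarith)
  linarith

lemma jensen_aux_null {m : ℕ} {s : Set (E m)} {f : E m → E m} {K : NNReal}
    (h : LipschitzOnWith K f s) (hs : volume s = 0) : volume (f '' s) = 0 := by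
  have hd : (0 : ℝ) ≤ ((Module.finrank ℝ (E m) : ℕ) : ℝ) := Nat.cast_nonneg _
  have h1 : (volume : Measure (E m))
      = Measure.addHaarScalarFactor volume μH[(Module.finrank ℝ (E m) : ℝ)]
        • μH[(Module.finrank ℝ (E m) : ℝ)] :=
    Measure.isAddLeftInvariant_eq_smul _ _
  have h2 : (μH[(Module.finrank ℝ (E m) : ℝ)] : Measure (E m))
      = Measure.addHaarScalarFactor μH[(Module.finrank ℝ (E m) : ℝ)] volume • volume :=
    Measure.isAddLeftInvariant_eq_smul _ _
  have hs' : μH[(Module.finrank ℝ (E m) : ℝ)] s = 0 := by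
    rw [h2]
    simp [hs]
  have him : μH[(Module.finrank ℝ (E m) : ℝ)] (f '' s) = 0 := by
    have H := h.hausdorffMeasure_image_le hd
    rw [hs', mul_zero] at H
    exact le_antisymm H zero_le
  rw [h1]
  rw [Measure.smul_apply, him, smul_zero]

lemma jensen_sub (n : ℕ) (ψ : E n → ℝ) (C : ℝ) (hC : 0 ≤ C) (x₀ : E n) (ρ : ℝ) (hρ : 0 < ρ)
    (hψ : ConvexOn ℝ Set.univ ψ)
    (u x : E n) (hx : x ∈ closedBall x₀ (ρ/2))
    (hup : ∀ y ∈ closedBall x₀ ρ, ψ y ≤ ψ x + ⟪u, y - x⟫ + (C/2) * ‖y - x‖ ^ 2)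
    (y : E n) (hy : y ∈ closedBall x₀ ρ) :
    ψ x + ⟪u, y - x⟫ ≤ ψ y := by
  refine real_le_of_forall_pos_le_add' fun ε hε => ?_
  rcases eq_or_ne y x with rfl | hne
  · simp only [sub_self, inner_zero_right, add_zero]
    linarith
  have hx' : x ∈ closedBall x₀ ρ := closedBall_subset_closedBall (by linarith) hx
  set D : ℝ := ‖y - x‖ with hDdef
  have hD : 0 < D := by
    rw [hDdef]
    exact norm_sub_pos_iff.mpr hne
  set t : ℝ := min (min (ρ / (2 * D)) 1) (2 * ε / (C * D ^ 2 + 1)) with htdef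
  have ht0 : 0 < t := lt_min (lt_min (by positivity) one_pos) (by positivity)
  have ht1 : t ≤ 1 := le_trans (min_le_left _ _) (min_le_right _ _)
  have ht2 : t * D ≤ ρ / 2 := by
    have h : t ≤ ρ / (2 * D) := le_trans (min_le_left _ _) (min_le_left _ _)
    calc t * D ≤ (ρ / (2 * D)) * D := mul_le_mul_of_nonneg_right h hD.le
    _ = ρ / 2 := by field_simp
  have ht3 : C * t * D ^ 2 / 2 ≤ ε := by
    have hpos : (0:ℝ) < C * D ^ 2 + 1 := by positivity
    have h := min_le_right (min (ρ / (2 * D)) 1) (2 * ε / (C * D ^ 2 + 1))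
    rw [← htdef] at h
    have h2 : t * (C * D ^ 2 + 1) ≤ 2 * ε := by
      rw [← le_div_iff₀ hpos] at *
      exact h
    nlinarith [ht0.le, mul_nonneg (mul_nonneg hC ht0.le) (sq_nonneg D)]
  set zp : E n := x + t • (y - x) with hzp
  set zm : E n := x - t • (y - x) with hzm
  have hzpe : zp = (1 - t) • x + t • y := by
    rw [hzp]; module
  have hzpB : zp ∈ closedBall x₀ ρ := by
    rw [hzpe]
    exact (convex_closedBall x₀ ρ) hx' hy (by linarith) ht0.le (by ring)
  have hzmB : zm ∈ closedBall x₀ ρ := by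
    have h1 : dist zm x = t * D := by
      rw [hzm, dist_eq_norm, sub_sub_cancel_left, norm_neg, norm_smul,
        Real.norm_eq_abs, abs_of_nonneg ht0.le, ← hDdef]
    have h2 : dist zm x₀ ≤ dist zm x + dist x x₀ := dist_triangle _ _ _
    have h3 : dist x x₀ ≤ ρ / 2 := mem_closedBall.mp hx
    rw [mem_closedBall]
    rw [h1] at h2
    linarith
  have hconv1 : ψ zp ≤ (1 - t) * ψ x + t * ψ y := by
    rw [hzpe]
    exact hψ.2 (Set.mem_univ x) (Set.mem_univ y) (by linarith) ht0.le (by ring)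
  have hmid : ψ x ≤ (1/2) * ψ zp + (1/2) * ψ zm := by
    have h := hψ.2 (Set.mem_univ zp) (Set.mem_univ zm)
      (by norm_num : (0:ℝ) ≤ 1/2) (by norm_num : (0:ℝ) ≤ 1/2) (by norm_num)
    rw [show (1/2 : ℝ) • zp + (1/2 : ℝ) • zm = x by rw [hzp, hzm]; module] at h
    exact h
  have hupz : ψ zm ≤ ψ x + ⟪u, zm - x⟫ + (C/2) * ‖zm - x‖ ^ 2 := hup zm hzmB
  have hin : ⟪u, zm - x⟫ = -(t * ⟪u, y - x⟫) := by
    rw [hzm, show x - t • (y - x) - x = -(t • (y - x)) by abel, inner_neg_right,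
      real_inner_smul_right]
  have hnz : ‖zm - x‖ ^ 2 = t ^ 2 * D ^ 2 := by
    rw [hzm, show x - t • (y - x) - x = -(t • (y - x)) by abel, norm_neg, norm_smul,
      Real.norm_eq_abs, abs_of_nonneg ht0.le, ← hDdef, mul_pow]
  rw [hin, hnz] at hupz
  have H : t * ψ x + t * ⟪u, y - x⟫ ≤ t * ψ y + C / 2 * t ^ 2 * D ^ 2 := by nlinarith
  have H2 : t * (ψ x + ⟪u, y - x⟫) ≤ t * (ψ y + C * t * D ^ 2 / 2) := by nlinarith
  have H3 := (mul_le_mul_iff_right₀ ht0).mp H2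
  linarith

lemma jensen_key (n : ℕ) (ψ : E n → ℝ) (C : ℝ) (hC : 0 ≤ C) (x₀ : E n) (ρ : ℝ) (hρ : 0 < ρ)
    (x x' p p' : E n) (hx : x ∈ closedBall x₀ (ρ/2)) (hx' : x' ∈ closedBall x₀ (ρ/2))
    (hupx : ∀ y ∈ closedBall x₀ ρ, ψ y ≤ ψ x + ⟪C • x - p, y - x⟫ + (C/2) * ‖y - x‖ ^ 2)
    (hupx' : ∀ y ∈ closedBall x₀ ρ, ψ y ≤ ψ x' + ⟪C • x' - p', y - x'⟫ + (C/2) * ‖y - x'‖ ^ 2)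
    (hsubx : ∀ y ∈ closedBall x₀ ρ, ψ x + ⟪C • x - p, y - x⟫ ≤ ψ y)
    (hsubx' : ∀ y ∈ closedBall x₀ ρ, ψ x' + ⟪C • x' - p', y - x'⟫ ≤ ψ y) :
    ‖p - p'‖ ≤ 5 * C * ‖x - x'‖ := by
  set u : E n := C • x - p with hu
  set u' : E n := C • x' - p' with hu'
  have hxB : x ∈ closedBall x₀ ρ := closedBall_subset_closedBall (by linarith) hx
  have hx'B : x' ∈ closedBall x₀ ρ := closedBall_subset_closedBall (by linarith) hx'
  -- base inequality
  have base : ∀ y ∈ closedBall x₀ ρ, ⟪u' - u, y - x'⟫ ≤ (C/2) * ‖y - x‖ ^ 2 := by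
    intro y hy
    have h1 := hupx y hy
    have h2 := hsubx x' hx'B
    have h3 := hsubx' y hy
    have e1 : ⟪u, y - x⟫ - ⟪u, x' - x⟫ = ⟪u, y - x'⟫ := by
      rw [← inner_sub_right]
      congr 1
      abel
    rw [inner_sub_left]
    linarith
  -- step inequality
  have step : ∀ s : ℝ, 0 < s → s ≤ ρ/2 →
      s * ‖u' - u‖ ≤ (C/2) * (‖x - x'‖ + s) ^ 2 := by
    intro s hs0 hs1
    rcases eq_or_ne u' u with he | hne
    · rw [he, sub_self, norm_zero, mul_zero]
      positivity
    have hvne : u' - u ≠ 0 := sub_ne_zero.mpr hne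
    set d : E n := ‖u' - u‖⁻¹ • (u' - u) with hd
    have hdn : ‖d‖ = 1 := norm_smul_inv_norm hvne
    set y : E n := x' + s • d with hy
    have hyB : y ∈ closedBall x₀ ρ := by
      have h1 : dist y x' = s := by
        rw [hy, dist_eq_norm, add_sub_cancel_left, norm_smul, Real.norm_eq_abs,
          abs_of_nonneg hs0.le, hdn, mul_one]
      have h2 : dist y x₀ ≤ dist y x' + dist x' x₀ := dist_triangle _ _ _
      have h3 : dist x' x₀ ≤ ρ/2 := mem_closedBall.mp hx'
      rw [mem_closedBall]
      rw [h1] at h2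
      linarith
    have hbase := base y hyB
    have hL : ⟪u' - u, y - x'⟫ = s * ‖u' - u‖ := by
      rw [hy, add_sub_cancel_left, real_inner_smul_right, hd, real_inner_smul_right,
        real_inner_self_eq_norm_sq]
      have : ‖u' - u‖ ≠ 0 := norm_ne_zero_iff.mpr hvne
      field_simp
    have hR : ‖y - x‖ ≤ ‖x - x'‖ + s := by
      rw [hy, show x' + s • d - x = (x' - x) + s • d by abel]
      calc ‖(x' - x) + s • d‖ ≤ ‖x' - x‖ + ‖s • d‖ := norm_add_le _ _
      _ = ‖x' - x‖ + s := by
          rw [norm_smul, Real.norm_eq_abs, abs_of_nonneg hs0.le, hdn, mul_one]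
      _ = ‖x - x'‖ + s := by rw [norm_sub_rev]
    have hR2 : (C/2) * ‖y - x‖ ^ 2 ≤ (C/2) * (‖x - x'‖ + s) ^ 2 :=
      mul_le_mul_of_nonneg_left (pow_le_pow_left₀ (norm_nonneg _) hR 2) (by positivity)
    rw [hL] at hbase
    linarith
  -- distance between the centers
  have hxx : ‖x - x'‖ ≤ ρ := by
    have h1 : dist x x' ≤ dist x x₀ + dist x₀ x' := dist_triangle _ _ _
    have h2 : dist x x₀ ≤ ρ/2 := mem_closedBall.mp hx
    have h3 : dist x₀ x' ≤ ρ/2 := by rw [dist_comm]; exact mem_closedBall.mp hx'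
    rw [← dist_eq_norm]
    linarith
  -- bound on ‖u' - u‖
  have hu_bound : ‖u' - u‖ ≤ 4 * C * ‖x - x'‖ := by
    rcases eq_or_lt_of_le (norm_nonneg (x - x')) with h0 | hpos
    · -- x = x'
      have hxeq : ‖x - x'‖ = 0 := h0.symm
      rw [hxeq, mul_zero]
      refine real_le_of_forall_pos_le_add' fun ε hε => ?_
      rw [zero_add]
      set s : ℝ := min (ρ/2) (2 * ε / (C + 1)) with hs
      have hs0 : 0 < s := lt_min (by linarith) (by positivity)
      have hs1 : s ≤ ρ/2 := min_le_left _ _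
      have h := step s hs0 hs1
      rw [hxeq, zero_add] at h
      have h2 : ‖u' - u‖ ≤ C * s / 2 := by
        nlinarith
      have h3 : s ≤ 2 * ε / (C + 1) := min_le_right _ _
      have h4 : C * s / 2 ≤ ε := by
        have hp : (0:ℝ) < C + 1 := by linarith
        rw [le_div_iff₀ hp] at h3
        nlinarith
      linarith
    · rcases le_or_gt ‖x - x'‖ (ρ/2) with hc1 | hc1
      · have h := step ‖x - x'‖ hpos hc1
        nlinarith
      · have h := step (ρ/2) (by linarith) le_rfl
        have e1 : (‖x - x'‖ + ρ/2) ^ 2 ≤ 4 * ‖x - x'‖ ^ 2 := by nlinarith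
        have e2 : ρ/2 * ‖u' - u‖ ≤ 2 * C * ‖x - x'‖ ^ 2 := by nlinarith
        have e3 : C * ‖x - x'‖ * ‖x - x'‖ ≤ C * ‖x - x'‖ * ρ :=
          mul_le_mul_of_nonneg_left hxx (mul_nonneg hC (norm_nonneg _))
        nlinarith [e2, e3, hρ]
  -- conclude
  have hpp : p - p' = C • (x - x') - (u - u') := by
    rw [hu, hu']
    module
  rw [hpp]
  calc ‖C • (x - x') - (u - u')‖ ≤ ‖C • (x - x')‖ + ‖u - u'‖ := norm_sub_le _ _
  _ = C * ‖x - x'‖ + ‖u' - u‖ := by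
      rw [norm_smul, Real.norm_eq_abs, abs_of_nonneg hC, norm_sub_rev u u']
  _ ≤ C * ‖x - x'‖ + 4 * C * ‖x - x'‖ := by linarith
  _ = 5 * C * ‖x - x'‖ := by ring

/-- Jensen's maximum principle: if a semiconvex `φ` has a strict maximum over
`B̄(x₀, ρ)` at `x₀`, then for every `δ > 0` the set of points `x ∈ B(x₀, ρ)` at which
some linear perturbation `y ↦ φ(y) + ⟨p, y⟩` with `|p| ≤ δ` attains its maximum over
`B̄(x₀, ρ)` has positive Lebesgue measure. -/
theorem jensen_maximum_principle (n : ℕ) (hn : 1 ≤ n)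
    (φ : E n → ℝ) (C : ℝ) (hC : 0 ≤ C)
    (hφ : ConvexOn ℝ Set.univ (fun x => φ x + (C / 2) * ‖x‖ ^ 2))
    (x₀ : E n) (ρ : ℝ) (hρ : 0 < ρ)
    (hstrict : ∀ x ∈ closedBall x₀ ρ, x ≠ x₀ → φ x < φ x₀)
    (δ : ℝ) (hδ : 0 < δ) :
    0 < volume {x ∈ ball x₀ ρ | ∃ p : E n, ‖p‖ ≤ δ ∧
      ∀ y ∈ closedBall x₀ ρ, φ y + ⟪p, y⟫ ≤ φ x + ⟪p, x⟫} := by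
  classical
  -- abbreviations
  set ψ : E n → ℝ := fun x => φ x + (C / 2) * ‖x‖ ^ 2 with hψdef
  have hψ : ConvexOn ℝ Set.univ ψ := hφ
  have hψc : Continuous ψ := by
    rw [← continuousOn_univ]
    exact hψ.continuousOn isOpen_univ
  have hφc : Continuous φ := by
    have : φ = fun x => ψ x - (C / 2) * ‖x‖ ^ 2 := by
      funext x; simp [hψdef]
    rw [this]
    fun_prop
  -- the maximality predicate: P p x says that x is a maximum point of φ + ⟪p,·⟫
  set P : E n → E n → Prop :=
    fun p x => ∀ y ∈ closedBall x₀ ρ, φ y + ⟪p, y⟫ ≤ φ x + ⟪p, x⟫ with hPdef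
  -- a maximum point of φ on the annulus
  have hann : ∃ a ∈ closedBall x₀ ρ \ ball x₀ (ρ/2),
      ∀ x ∈ closedBall x₀ ρ \ ball x₀ (ρ/2), φ x ≤ φ a := by
    have hcomp : IsCompact (closedBall x₀ ρ \ ball x₀ (ρ/2)) :=
      (isCompact_closedBall x₀ ρ).diff isOpen_ball
    have hne : (closedBall x₀ ρ \ ball x₀ (ρ/2)).Nonempty := by
      refine ⟨x₀ + (3*ρ/4) • EuclideanSpace.single (⟨0, hn⟩ : Fin n) (1:ℝ), ?_, ?_⟩
      · rw [mem_closedBall, dist_eq_norm, add_sub_cancel_left, norm_smul,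
          EuclideanSpace.norm_single]
        simp only [norm_one, mul_one, Real.norm_eq_abs]
        rw [abs_of_nonneg (by linarith)]
        linarith
      · rw [mem_ball, dist_eq_norm, add_sub_cancel_left, norm_smul,
          EuclideanSpace.norm_single]
        simp only [norm_one, mul_one, Real.norm_eq_abs]
        rw [abs_of_nonneg (by linarith)]
        push_neg
        linarith
    obtain ⟨a, ha, hmax⟩ := hcomp.exists_isMaxOn hne hφc.continuousOn
    exact ⟨a, ha, fun x hx => hmax hx⟩
  obtain ⟨a, haA, haMax⟩ := hann
  set η : ℝ := φ x₀ - φ a with hηdef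
  have hη : 0 < η := by
    have ha1 : a ∈ closedBall x₀ ρ := haA.1
    have ha2 : a ≠ x₀ := by
      intro h
      exact haA.2 (by simp [h, mem_ball, half_pos hρ])
    have := hstrict a ha1 ha2
    simp only [hηdef]; linarith
  set δ' : ℝ := min δ (η / (2 * ρ)) with hδ'def
  have hδ' : 0 < δ' := lt_min hδ (by positivity)
  -- localization: maximizers with small slope lie in the half ball
  have hloc : ∀ p x, ‖p‖ ≤ δ' → x ∈ closedBall x₀ ρ → P p x →
      x ∈ closedBall x₀ (ρ/2) := by
    intro p x hp hx hP
    by_contra hxout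
    have hxA : x ∈ closedBall x₀ ρ \ ball x₀ (ρ/2) :=
      ⟨hx, fun hb => hxout (ball_subset_closedBall hb)⟩
    have h1 : φ x ≤ φ a := haMax x hxA
    have h2 : φ x₀ + ⟪p, x₀⟫ ≤ φ x + ⟪p, x⟫ := hP x₀ (mem_closedBall_self hρ.le)
    have h3 : ⟪p, x⟫ - ⟪p, x₀⟫ = ⟪p, x - x₀⟫ := (inner_sub_right _ _ _).symm
    have h4 : ⟪p, x - x₀⟫ ≤ ‖p‖ * ‖x - x₀‖ := real_inner_le_norm _ _
    have h5 : ‖x - x₀‖ ≤ ρ := mem_closedBall_iff_norm.mp hx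
    have h6 : ‖p‖ * ‖x - x₀‖ ≤ δ' * ρ :=
      mul_le_mul hp h5 (norm_nonneg _) (le_trans (norm_nonneg p) hp)
    have h7 : δ' * ρ ≤ η / 2 := by
      have h8 := mul_le_mul_of_nonneg_right (min_le_right δ (η / (2 * ρ))) hρ.le
      rw [← hδ'def] at h8
      calc δ' * ρ ≤ η / (2 * ρ) * ρ := h8
      _ = η / 2 := by field_simp
    linarith
  -- upper quadratic bound at maximizers
  have hupper : ∀ p x, x ∈ closedBall x₀ ρ → P p x → ∀ y ∈ closedBall x₀ ρ,
      ψ y ≤ ψ x + ⟪C • x - p, y - x⟫ + (C/2) * ‖y - x‖ ^ 2 := by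
    intro p x hx hP y hy
    have h1 : φ y + ⟪p, y⟫ ≤ φ x + ⟪p, x⟫ := hP y hy
    have h2 : ‖y‖ ^ 2 = ‖x‖ ^ 2 + 2 * ⟪x, y - x⟫ + ‖y - x‖ ^ 2 := by
      have h := norm_add_sq_real x (y - x)
      rw [show x + (y - x) = y by abel] at h
      exact h
    have h3 : ⟪C • x - p, y - x⟫ = C * ⟪x, y - x⟫ - ⟪p, y - x⟫ := by
      rw [inner_sub_left, real_inner_smul_left]
    have h4 : ⟪p, y - x⟫ = ⟪p, y⟫ - ⟪p, x⟫ := inner_sub_right _ _ _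
    simp only [hψdef]
    rw [h2, h3, h4]
    ring_nf
    nlinarith [h1]
  -- subgradient inequality at maximizers in the half ball
  have hsub : ∀ p x, x ∈ closedBall x₀ (ρ/2) → P p x → ∀ y ∈ closedBall x₀ ρ,
      ψ x + ⟪C • x - p, y - x⟫ ≤ ψ y := by
    intro p x hx hP
    exact jensen_sub n ψ C hC x₀ ρ hρ hψ (C • x - p) x hx
      (hupper p x (closedBall_subset_closedBall (by linarith) hx) hP)
  -- the key Lipschitz estimate
  have hkey : ∀ x x' p p', x ∈ closedBall x₀ (ρ/2) → x' ∈ closedBall x₀ (ρ/2) →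
      P p x → P p' x' → ‖p - p'‖ ≤ 5 * C * ‖x - x'‖ := by
    intro x x' p p' hx hx' hP hP'
    have hxB : x ∈ closedBall x₀ ρ := closedBall_subset_closedBall (by linarith) hx
    have hx'B : x' ∈ closedBall x₀ ρ := closedBall_subset_closedBall (by linarith) hx'
    exact jensen_key n ψ C hC x₀ ρ hρ x x' p p' hx hx'
      (hupper p x hxB hP) (hupper p' x' hx'B hP')
      (hsub p x hx hP) (hsub p' x' hx' hP')
  -- the slope selection function
  set Q : E n → Prop := fun x => ∃ p, ‖p‖ ≤ δ' ∧ P p x with hQdef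
  set f : E n → E n := fun x => if h : Q x then h.choose else 0 with hfdef
  have hfspec : ∀ x, Q x → ‖f x‖ ≤ δ' ∧ P (f x) x := by
    intro x hx
    simp only [hfdef, dif_pos hx]
    exact hx.choose_spec
  set S : Set (E n) := {x | x ∈ closedBall x₀ (ρ/2) ∧ Q x} with hSdef
  have hLip : LipschitzOnWith (5 * C).toNNReal f S := by
    rw [lipschitzOnWith_iff_dist_le_mul]
    intro x hx y hy
    rw [dist_eq_norm, dist_eq_norm, Real.coe_toNNReal _ (by positivity)]
    exact hkey x y (f x) (f y) hx.1 hy.1 (hfspec x hx.2).2 (hfspec y hy.2).2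
  have hsurj : closedBall (0 : E n) δ' ⊆ f '' S := by
    intro q hq
    have hqn : ‖q‖ ≤ δ' := by rwa [mem_closedBall, dist_zero_right] at hq
    have hcont : Continuous fun y : E n => φ y + ⟪q, y⟫ :=
      hφc.add (continuous_const.inner continuous_id)
    obtain ⟨x, hxB, hxMax⟩ := (isCompact_closedBall x₀ ρ).exists_isMaxOn
      ⟨x₀, mem_closedBall_self hρ.le⟩ hcont.continuousOn
    have hPq : P q x := fun y hy => hxMax hy
    have hxhalf := hloc q x hqn hxB hPq
    have hQx : Q x := ⟨q, hqn, hPq⟩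
    have hfq : f x = q := by
      have h1 := hfspec x hQx
      have h2 := hkey x x (f x) q hxhalf hxhalf h1.2 hPq
      rw [sub_self, norm_zero, mul_zero] at h2
      have h3 := le_antisymm h2 (norm_nonneg _)
      rwa [norm_sub_eq_zero_iff] at h3
    exact ⟨x, ⟨hxhalf, hQx⟩, hfq⟩
  -- the measure argument
  by_contra hcon
  push_neg at hcon
  have hK0 : volume {x ∈ ball x₀ ρ | ∃ p : E n, ‖p‖ ≤ δ ∧
      ∀ y ∈ closedBall x₀ ρ, φ y + ⟪p, y⟫ ≤ φ x + ⟪p, x⟫} = 0 :=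
    le_antisymm hcon zero_le
  have hSsub : S ⊆ {x ∈ ball x₀ ρ | ∃ p : E n, ‖p‖ ≤ δ ∧
      ∀ y ∈ closedBall x₀ ρ, φ y + ⟪p, y⟫ ≤ φ x + ⟪p, x⟫} := by
    rintro x ⟨hx1, p, hp1, hp2⟩
    exact ⟨closedBall_subset_ball (by linarith) hx1, p, hp1.trans (min_le_left _ _), hp2⟩
  have hS0 : volume S = 0 := measure_mono_null hSsub hK0
  have himg : volume (f '' S) = 0 := jensen_aux_null hLip hS0
  have hfinal : volume (closedBall (0 : E n) δ') = 0 := measure_mono_null hsurj himg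
  exact absurd hfinal (measure_closedBall_pos volume 0 hδ').ne'
end
end

section
/- (Alexandrov's theorem) Let n ≥ 1 and let f : ℝ^n → ℝ be convex. Then for Lebesgue-almost every x ∈ ℝ^n there exist p ∈ ℝ^n and a symmetric n×n real matrix A such that f(x+h) = f(x) + ⟨p, h⟩ + (1/2)⟨A h, h⟩ + o(|h|²) as h → 0. -/
open scoped RealInnerProductSpace Topology
open Filter Asymptotics Metric MeasureTheory

noncomputable section

namespace Alex

/-- quadratic root bound -/
lemma sq_le_lin_bound {t A B : ℝ} (hA : 0 ≤ A) (hB : 0 ≤ B) (ht : 0 ≤ t)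
    (h : t ^ 2 ≤ A + B * t) : t ≤ B + Real.sqrt A := by
  by_contra hc
  push_neg at hc
  have hsA : Real.sqrt A * Real.sqrt A = A := Real.mul_self_sqrt hA
  nlinarith [Real.sqrt_nonneg A]

variable {V : Type*} [NormedAddCommGroup V] [InnerProductSpace ℝ V]

/-- `g` is a (global) subgradient of `f` at `z`. -/
def IsSubgrad (f : V → ℝ) (z g : V) : Prop := ∀ w, f z + ⟪g, w - z⟫ ≤ f w

variable [FiniteDimensional ℝ V]

variable (f : V → ℝ)

section Convex

lemma cont (hf : ConvexOn ℝ Set.univ f) : Continuous f := hf.locallyLipschitz.continuous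

/-- linear lower bound -/
lemma lower_bound (hf : ConvexOn ℝ Set.univ f) : ∃ a b : ℝ, 0 ≤ b ∧ ∀ w, a - b * ‖w‖ ≤ f w := by
  obtain ⟨C, hC⟩ := (isCompact_closedBall (0:V) 1).exists_bound_of_continuousOn
    (cont f hf).continuousOn
  have hC0 : 0 ≤ C := le_trans (norm_nonneg _) (hC 0 (mem_closedBall_self zero_le_one))
  refine ⟨min (f 0) (-C), C + |f 0|, by positivity, fun w => ?_⟩
  rcases le_or_gt ‖w‖ 1 with hw | hw
  · have h1 : ‖f w‖ ≤ C := hC w (mem_closedBall_zero_iff.2 hw)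
    have h2 := abs_le.1 (by simpa [Real.norm_eq_abs] using h1)
    have h3 := min_le_right (f 0) (-C)
    nlinarith [norm_nonneg w, abs_nonneg (f 0)]
  · have hs : (0:ℝ) < ‖w‖ := lt_trans one_pos hw
    have hu1 : ‖-(‖w‖⁻¹ • w)‖ ≤ 1 := by
      rw [norm_neg, norm_smul, norm_inv, norm_norm, inv_mul_cancel₀ hs.ne']
    have hfu : f (-(‖w‖⁻¹ • w)) ≤ C := by
      have h := hC _ (mem_closedBall_zero_iff.2 hu1)
      exact (abs_le.1 (by simpa [Real.norm_eq_abs] using h)).2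
    have hkey := hf.2 (Set.mem_univ w) (Set.mem_univ (-(‖w‖⁻¹ • w)))
      (show (0:ℝ) ≤ 1/(1+‖w‖) by positivity) (show (0:ℝ) ≤ ‖w‖/(1+‖w‖) by positivity)
      (show 1/(1+‖w‖) + ‖w‖/(1+‖w‖) = 1 by field_simp)
    have hv : (1/(1+‖w‖)) • w + (‖w‖/(1+‖w‖)) • -(‖w‖⁻¹ • w) = 0 := by
      rw [smul_neg, ← sub_eq_add_neg, smul_smul, ← sub_smul]
      convert zero_smul ℝ w
      field_simp; ring
    rw [hv] at hkey
    simp only [smul_eq_mul] at hkey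
    have h1s : (0:ℝ) < 1 + ‖w‖ := by positivity
    have hkey2 : (1+‖w‖) * f 0 ≤ f w + ‖w‖ * C := by
      calc (1+‖w‖) * f 0
          ≤ (1+‖w‖) * ((1/(1+‖w‖)) * f w + (‖w‖/(1+‖w‖)) * f (-(‖w‖⁻¹ • w))) :=
            mul_le_mul_of_nonneg_left hkey h1s.le
        _ = f w + ‖w‖ * f (-(‖w‖⁻¹ • w)) := by field_simp
        _ ≤ f w + ‖w‖ * C := by nlinarith [hs.le]
    have hmin := min_le_left (f 0) (-C)
    nlinarith [mul_le_mul_of_nonneg_right (neg_abs_le (f 0)) hs.le]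

/-- Lipschitz on some ball around every point -/
lemma lip_ball (hf : ConvexOn ℝ Set.univ f) (x : V) : ∃ r L : ℝ, 0 < r ∧ 0 ≤ L ∧
    ∀ z ∈ ball x r, ∀ z' ∈ ball x r, |f z - f z'| ≤ L * ‖z - z'‖ := by
  obtain ⟨K, t, ht, hK⟩ := hf.locallyLipschitz x
  obtain ⟨r, hr, hball⟩ := Metric.mem_nhds_iff.1 ht
  refine ⟨r, (K:ℝ), hr, K.coe_nonneg, fun z hz z' hz' => ?_⟩
  have h := (hK.mono hball).dist_le_mul z hz z' hz'
  rwa [Real.dist_eq, dist_eq_norm] at h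

/-- the gradient at a differentiability point is a subgradient -/
lemma grad_subgrad (hf : ConvexOn ℝ Set.univ f) {x p : V} (hd : HasFDerivAt f (innerSL ℝ p) x) :
    IsSubgrad f x p := by
  intro w
  have hd' : HasFDerivAt f (innerSL ℝ p) ((fun t : ℝ => x + t • (w - x)) 0) := by simpa using hd
  have hγ : HasDerivAt (fun t : ℝ => x + t • (w - x)) (w - x) 0 := by
    simpa using ((hasDerivAt_id (0:ℝ)).smul_const (w - x)).const_add x
  have hcomp : HasDerivAt (fun t : ℝ => f (x + t • (w - x))) ⟪p, w - x⟫ 0 := by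
    simpa [Function.comp_def] using hd'.comp_hasDerivAt 0 hγ
  have hmono : Tendsto (slope (fun t : ℝ => f (x + t • (w - x))) 0) (𝓝[>] 0) (𝓝 ⟪p, w - x⟫) :=
    (hasDerivAt_iff_tendsto_slope.1 hcomp).mono_left (nhdsWithin_mono 0 fun t ht => ne_of_gt ht)
  have hle : ∀ᶠ t in 𝓝[>] (0:ℝ), slope (fun t : ℝ => f (x + t • (w - x))) 0 t ≤ f w - f x := by
    filter_upwards [Ioc_mem_nhdsGT_of_mem (Set.mem_Ico.2 ⟨le_rfl, one_pos⟩)] with t ht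
    have hcvx := hf.2 (Set.mem_univ w) (Set.mem_univ x) ht.1.le
      (by linarith [ht.2] : (0:ℝ) ≤ 1 - t) (by ring)
    have hpt : t • w + (1 - t) • x = x + t • (w - x) := by
      rw [smul_sub, sub_smul, one_smul]; abel
    rw [hpt] at hcvx
    simp only [smul_eq_mul] at hcvx
    rw [slope_def_field, sub_zero, div_le_iff₀ ht.1]
    simp only [zero_smul, add_zero]
    nlinarith [hcvx]
  have hlim := le_of_tendsto hmono hle
  linarith

/-- existence of the proximal point -/
lemma exists_proxmin (hf : ConvexOn ℝ Set.univ f) (l : ℝ) (hl : 0 < l) (y : V) :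
    ∃ z : V, ∀ w, l * f z + ‖z - y‖ ^ 2 / 2 ≤ l * f w + ‖w - y‖ ^ 2 / 2 := by
  obtain ⟨a, b, hb, hab⟩ := lower_bound f hf
  set F : V → ℝ := fun w => l * f w + ‖w - y‖ ^ 2 / 2 with hF
  have hFc : Continuous F := (continuous_const.mul (cont f hf)).add
    (((continuous_id.sub continuous_const).norm.pow 2).div_const 2)
  set A2 : ℝ := max (l * f y - l * a + l * b * ‖y‖) 0 with hA2
  set R : ℝ := 2 * (l * b) + Real.sqrt (2 * A2) with hR
  have hA20 : 0 ≤ A2 := le_max_right _ _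
  have hR0 : 0 ≤ R := by positivity
  have hFy : F y = l * f y := by simp [hF]
  have hcoer : ∀ w, F w ≤ F y → ‖w - y‖ ≤ R := by
    intro w hw
    have hsq : ‖w - y‖ ^ 2 ≤ 2 * A2 + (2 * (l * b)) * ‖w - y‖ := by
      have h1 : l * (a - b * ‖w‖) ≤ l * f w := mul_le_mul_of_nonneg_left (hab w) hl.le
      have h2 : ‖w‖ ≤ ‖y‖ + ‖w - y‖ := by
        have h := norm_add_le y (w - y)
        have e : y + (w - y) = w := by abel
        rwa [e] at h
      have h4 := le_max_left (l * f y - l * a + l * b * ‖y‖) 0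
      have hFw : F w = l * f w + ‖w - y‖ ^ 2 / 2 := rfl
      rw [hFw, hFy] at hw
      nlinarith [mul_le_mul_of_nonneg_left h2 (mul_nonneg hl.le hb)]
    have := sq_le_lin_bound (by positivity) (by positivity) (norm_nonneg (w - y)) hsq
    calc ‖w - y‖ ≤ 2 * (l * b) + Real.sqrt (2 * A2) := this
      _ = R := rfl
  obtain ⟨z, hzmem, hz⟩ := (isCompact_closedBall y R).exists_isMinOn
    ⟨y, mem_closedBall_self hR0⟩ hFc.continuousOn
  refine ⟨z, fun w => ?_⟩
  have hzw : F z ≤ F w → l * f z + ‖z - y‖ ^ 2 / 2 ≤ l * f w + ‖w - y‖ ^ 2 / 2 := fun h => h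
  apply hzw
  rcases le_or_gt ‖w - y‖ R with h | h
  · exact isMinOn_iff.1 hz w (mem_closedBall_iff_norm.2 h)
  · by_contra hcon
    push_neg at hcon
    have h5 : F w ≤ F y := le_trans hcon.le (isMinOn_iff.1 hz y (mem_closedBall_self hR0))
    exact absurd (hcoer w h5) (not_le.2 h)

/-- the proximal map -/
def prox (hf : ConvexOn ℝ Set.univ f) (l : ℝ) (hl : 0 < l) (y : V) : V := Classical.choose (exists_proxmin f hf l hl y)

lemma prox_min (hf : ConvexOn ℝ Set.univ f) (l : ℝ) (hl : 0 < l) (y : V) : ∀ w,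
    l * f (prox f hf l hl y) + ‖prox f hf l hl y - y‖ ^ 2 / 2 ≤ l * f w + ‖w - y‖ ^ 2 / 2 :=
  Classical.choose_spec (exists_proxmin f hf l hl y)

lemma prox_subgrad (hf : ConvexOn ℝ Set.univ f) (l : ℝ) (hl : 0 < l) (y : V) :
    IsSubgrad f (prox f hf l hl y) (l⁻¹ • (y - prox f hf l hl y)) := by
  intro w
  set z := prox f hf l hl y with hzdef
  have hmin := prox_min f hf l hl y
  have key : 0 ≤ l * (f w - f z) + ⟪z - y, w - z⟫ := by
    rcases eq_or_ne w z with rfl | hwz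
    · simp
    have hwz' : 0 < ‖w - z‖ ^ 2 := by
      exact pow_pos (norm_pos_iff.2 (sub_ne_zero.2 hwz)) 2
    by_contra hcon
    push_neg at hcon
    set c := -(l * (f w - f z) + ⟪z - y, w - z⟫) with hc
    have hc0 : 0 < c := by rw [hc]; linarith
    set t := min 1 (c / ‖w - z‖ ^ 2) with ht
    have ht0 : 0 < t := lt_min one_pos (div_pos hc0 hwz')
    have ht1 : t ≤ 1 := min_le_left _ _
    have h1 := hmin (z + t • (w - z))
    have hcvx : f (z + t • (w - z)) ≤ f z + t * (f w - f z) := by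
      have h := hf.2 (Set.mem_univ w) (Set.mem_univ z) ht0.le
        (by linarith : (0:ℝ) ≤ 1 - t) (by ring)
      have hpt : t • w + (1 - t) • z = z + t • (w - z) := by
        rw [smul_sub, sub_smul, one_smul]; abel
      rw [hpt] at h
      simp only [smul_eq_mul] at h
      linarith
    have hnorm : ‖z + t • (w - z) - y‖ ^ 2
        = ‖z - y‖ ^ 2 + 2 * (t * ⟪z - y, w - z⟫) + t ^ 2 * ‖w - z‖ ^ 2 := by
      have e : z + t • (w - z) - y = (z - y) + t • (w - z) := by abel
      rw [e, norm_add_sq_real, real_inner_smul_right, norm_smul, Real.norm_eq_abs,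
        mul_pow, sq_abs]
    have h2 : 0 ≤ t * (l * (f w - f z) + ⟪z - y, w - z⟫) + t ^ 2 * ‖w - z‖ ^ 2 / 2 := by
      nlinarith [h1, mul_le_mul_of_nonneg_left hcvx hl.le]
    have h3 : t * ‖w - z‖ ^ 2 ≤ c := by
      calc t * ‖w - z‖ ^ 2 ≤ (c / ‖w - z‖ ^ 2) * ‖w - z‖ ^ 2 :=
            mul_le_mul_of_nonneg_right (min_le_right _ _) hwz'.le
        _ = c := div_mul_cancel₀ c (ne_of_gt hwz')
    nlinarith [h2, mul_le_mul_of_nonneg_left h3 ht0.le, mul_pos ht0 hc0]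
  have h4 : ⟪y - z, w - z⟫ = -⟪z - y, w - z⟫ := by
    rw [← neg_sub z y, inner_neg_left]
  have h5 := mul_le_mul_of_nonneg_left key (le_of_lt (inv_pos.2 hl))
  rw [mul_zero, mul_add, ← mul_assoc, inv_mul_cancel₀ hl.ne', one_mul] at h5
  rw [real_inner_smul_left, h4]
  linarith

lemma subgrad_prox (hf : ConvexOn ℝ Set.univ f) {l : ℝ} (hl : 0 < l) {z g : V} (h : IsSubgrad f z g) :
    prox f hf l hl (z + l • g) = z := by
  set y := z + l • g with hy
  set z' := prox f hf l hl y with hz'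
  have h1 := h z'
  have h2 := prox_subgrad f hf l hl y z
  have h3 : ⟪l⁻¹ • (y - z'), z - z'⟫ = ⟪g, z - z'⟫ + l⁻¹ * ‖z - z'‖ ^ 2 := by
    rw [real_inner_smul_left]
    have e : y - z' = l • g + (z - z') := by rw [hy]; abel
    rw [e, inner_add_left, real_inner_smul_left, mul_add, ← mul_assoc,
      inv_mul_cancel₀ hl.ne', one_mul, real_inner_self_eq_norm_sq]
  rw [h3] at h2
  have h4 : ⟪g, z' - z⟫ = -⟪g, z - z'⟫ := by rw [← neg_sub z z', inner_neg_right]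
  rw [h4] at h1
  have hinv := inv_pos.2 hl
  have h8 : l⁻¹ * ‖z - z'‖ ^ 2 ≤ 0 := by linarith
  have h9 : l⁻¹ * ‖z - z'‖ ^ 2 = 0 := le_antisymm h8 (mul_nonneg hinv.le (sq_nonneg _))
  have h10 : ‖z - z'‖ ^ 2 = 0 := by
    rcases mul_eq_zero.1 h9 with h' | h'
    · exact absurd h' (ne_of_gt hinv)
    · exact h'
  have h11 : z - z' = 0 := by
    rwa [pow_eq_zero_iff two_ne_zero, norm_eq_zero] at h10
  have : z' = z := by
    have := sub_eq_zero.1 h11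
    exact this.symm
  exact this

lemma prox_lip (hf : ConvexOn ℝ Set.univ f) (l : ℝ) (hl : 0 < l) : LipschitzWith 1 (prox f hf l hl) := by
  apply LipschitzWith.of_dist_le_mul
  intro y y'
  set z := prox f hf l hl y with hzd
  set z' := prox f hf l hl y' with hzd'
  rcases eq_or_ne z z' with h | hne
  · rw [h]
    simpa using dist_nonneg
  have h1 := prox_subgrad f hf l hl y z'
  have h2 := prox_subgrad f hf l hl y' z
  rw [real_inner_smul_left] at h1 h2
  have hinv := inv_pos.2 hl
  have h3 : ⟪y - z, z' - z⟫ + ⟪y' - z', z - z'⟫ ≤ 0 := by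
    nlinarith [h1, h2, hinv]
  have e0 : y - z = (y - y') + ((y' - z') + (z' - z)) := by abel
  rw [e0, inner_add_left, inner_add_left] at h3
  have e1 : ⟪y' - z', z - z'⟫ = -⟪y' - z', z' - z⟫ := by
    rw [← neg_sub z' z, inner_neg_right]
  have e2 : ⟪z' - z, z' - z⟫ = ‖z - z'‖ ^ 2 := by
    rw [real_inner_self_eq_norm_sq, norm_sub_rev]
  have e3 : ⟪y - y', z' - z⟫ = -⟪y - y', z - z'⟫ := by
    rw [← neg_sub z z', inner_neg_right]
  rw [e1, e2, e3] at h3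
  have h4 : ‖z - z'‖ ^ 2 ≤ ⟪y - y', z - z'⟫ := by linarith
  have h5 : ‖z - z'‖ ^ 2 ≤ ‖y - y'‖ * ‖z - z'‖ :=
    le_trans h4 (real_inner_le_norm _ _)
  have hzz : 0 < ‖z - z'‖ := by rwa [norm_pos_iff, sub_ne_zero]
  have h6 : ‖z - z'‖ ≤ ‖y - y'‖ := by nlinarith
  rw [dist_eq_norm, dist_eq_norm, NNReal.coe_one, one_mul]
  exact h6

set_option maxHeartbeats 1600000 in
/-- existence of subgradients everywhere -/
lemma exists_subgrad (hf : ConvexOn ℝ Set.univ f) (z : V) : ∃ g, IsSubgrad f z g := by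
  obtain ⟨a, b, hb, hab⟩ := lower_bound f hf
  obtain ⟨r, L, hr, hL, hLip⟩ := lip_ball f hf z
  have hl : ∀ k : ℕ, (0:ℝ) < 1/(k+1) := fun k => by positivity
  set zk : ℕ → V := fun k => prox f hf (1/(k+1)) (hl k) z with hzk
  set gk : ℕ → V := fun k => ((1:ℝ)/(k+1))⁻¹ • (z - zk k) with hgk
  have hsub : ∀ k, IsSubgrad f (zk k) (gk k) := fun k => prox_subgrad f hf _ (hl k) z
  have hbound : ∀ k, ‖zk k - z‖ ^ 2 ≤ 2 * (1/(k+1)) * (f z - f (zk k)) := by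
    intro k
    have h := prox_min f hf (1/(k+1)) (hl k) z z
    simp only [sub_self, norm_zero] at h
    nlinarith [h]
  set C1 : ℝ := max (f z - a + b * ‖z‖) 0 with hC1
  have hC10 : 0 ≤ C1 := le_max_right _ _
  have hdist : ∀ k, ‖zk k - z‖ ≤ 2 * b / (k+1) + Real.sqrt (2 * C1 / (k+1)) := by
    intro k
    have hk1 : (0:ℝ) < (k:ℝ) + 1 := by positivity
    have hbig : ‖zk k - z‖ ^ 2 ≤ 2 * C1 / (k+1) + (2 * b / (k+1)) * ‖zk k - z‖ := by
      have h1 := hbound k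
      have h2 := hab (zk k)
      have h3 : ‖zk k‖ ≤ ‖z‖ + ‖zk k - z‖ := by
        have h := norm_add_le z (zk k - z)
        have e : z + (zk k - z) = zk k := by abel
        rwa [e] at h
      have h4 := le_max_left (f z - a + b * ‖z‖) 0
      have h5 : f z - f (zk k) ≤ C1 + b * ‖zk k - z‖ := by
        nlinarith [mul_le_mul_of_nonneg_left h3 hb]
      have h6 : 2 * (1/((k:ℝ)+1)) * (f z - f (zk k)) ≤
          2 * (1/((k:ℝ)+1)) * (C1 + b * ‖zk k - z‖) := by
        apply mul_le_mul_of_nonneg_left h5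
        positivity
      calc ‖zk k - z‖ ^ 2 ≤ 2 * (1/((k:ℝ)+1)) * (C1 + b * ‖zk k - z‖) := le_trans h1 h6
        _ = 2 * C1 / (k+1) + (2 * b / (k+1)) * ‖zk k - z‖ := by field_simp
    have := sq_le_lin_bound (by positivity) (by positivity) (norm_nonneg _) hbig
    linarith [this]
  have htend0 : Tendsto (fun k : ℕ => 2 * b / (k+1) + Real.sqrt (2 * C1 / (k+1)))
      atTop (𝓝 0) := by
    have h1 : Tendsto (fun k : ℕ => (1:ℝ)/(k+1)) atTop (𝓝 0) :=
      tendsto_one_div_add_atTop_nhds_zero_nat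
    have h2 : Tendsto (fun k : ℕ => 2 * b / ((k:ℝ)+1)) atTop (𝓝 0) := by
      have := h1.const_mul (2*b)
      simp only [mul_zero] at this
      apply this.congr
      intro k; field_simp
    have h3 : Tendsto (fun k : ℕ => 2 * C1 / ((k:ℝ)+1)) atTop (𝓝 0) := by
      have := h1.const_mul (2*C1)
      simp only [mul_zero] at this
      apply this.congr
      intro k; field_simp
    have h4 : Tendsto (fun k : ℕ => Real.sqrt (2 * C1 / ((k:ℝ)+1))) atTop (𝓝 0) := by
      have := (Real.continuous_sqrt.tendsto 0).comp h3
      simpa [Function.comp_def] using this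
    simpa using h2.add h4
  have htendz : Tendsto (fun k => ‖zk k - z‖) atTop (𝓝 0) := by
    apply squeeze_zero (fun k => norm_nonneg _) hdist htend0
  have htendz' : Tendsto zk atTop (𝓝 z) := by
    rw [tendsto_iff_norm_sub_tendsto_zero]
    exact htendz
  obtain ⟨K0, hK0⟩ := (Metric.tendsto_atTop.1 htendz' (r/2) (by positivity))
  have hzball : ∀ k ≥ K0, zk k ∈ ball z r := by
    intro k hk
    have := hK0 k hk
    rw [mem_ball]
    linarith [this, hr]
  have hgbound : ∀ k ≥ K0, ‖gk k‖ ≤ 2 * L := by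
    intro k hk
    have hk1 : (0:ℝ) < (k:ℝ) + 1 := by positivity
    have h1 := hbound k
    have h2 := hLip (zk k) (hzball k hk) z (mem_ball_self hr)
    have h3 : f z - f (zk k) ≤ L * ‖zk k - z‖ := by
      have := (abs_le.1 h2).1
      linarith
    have h4 : ‖zk k - z‖ ^ 2 ≤ (2 * (1/((k:ℝ)+1)) * L) * ‖zk k - z‖ := by
      nlinarith [h1, mul_le_mul_of_nonneg_left h3
        (by positivity : (0:ℝ) ≤ 2 * (1/((k:ℝ)+1)))]
    have h5 : ‖zk k - z‖ ≤ 2 * (1/((k:ℝ)+1)) * L := by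
      rcases eq_or_ne (‖zk k - z‖) 0 with h0 | h0
      · rw [h0]; positivity
      · have hpos : 0 < ‖zk k - z‖ := lt_of_le_of_ne (norm_nonneg _) (Ne.symm h0)
        nlinarith [h4, hpos]
    have h6 : ‖gk k‖ = ((k:ℝ)+1) * ‖zk k - z‖ := by
      rw [hgk]
      simp only []
      rw [norm_smul, Real.norm_eq_abs, one_div, inv_inv, norm_sub_rev,
        abs_of_pos hk1]
    rw [h6]
    calc ((k:ℝ)+1) * ‖zk k - z‖ ≤ ((k:ℝ)+1) * (2 * (1/((k:ℝ)+1)) * L) :=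
          mul_le_mul_of_nonneg_left h5 hk1.le
      _ = 2 * L := by field_simp
  obtain ⟨g, _, φ, hφ, hgtend⟩ := (isCompact_closedBall (0:V) (2*L)).tendsto_subseq
    (x := fun k => gk (k + K0))
    (fun k => mem_closedBall_zero_iff.2 (hgbound (k + K0) (Nat.le_add_left _ _)))
  refine ⟨g, fun w => ?_⟩
  have hφt : Tendsto (fun k => φ k + K0) atTop atTop :=
    (tendsto_add_atTop_nat K0).comp hφ.tendsto_atTop
  have hzt : Tendsto (fun k => zk (φ k + K0)) atTop (𝓝 z) := htendz'.comp hφt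
  have hgt : Tendsto (fun k => gk (φ k + K0)) atTop (𝓝 g) := hgtend
  have hft : Tendsto (fun k => f (zk (φ k + K0)) + ⟪gk (φ k + K0), w - zk (φ k + K0)⟫)
      atTop (𝓝 (f z + ⟪g, w - z⟫)) :=
    (((cont f hf).tendsto z).comp hzt).add (hgt.inner (tendsto_const_nhds.sub hzt))
  exact le_of_tendsto hft (Eventually.of_forall fun k => hsub _ w)

/-- quadratic error bound gives differentiability -/
lemma hasFDerivAt_of_quad {φ : V → ℝ} {y : V} {L : V →L[ℝ] ℝ} {C : ℝ}
    (h : ∀ y', |φ y' - φ y - L (y' - y)| ≤ C * ‖y' - y‖ ^ 2) : HasFDerivAt φ L y := by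
  rw [hasFDerivAt_iff_isLittleO, Asymptotics.isLittleO_iff]
  intro c hc
  have hM : (0:ℝ) ≤ max C 0 := le_max_right _ _
  filter_upwards [Metric.ball_mem_nhds y (show (0:ℝ) < c / (max C 0 + 1) by positivity)]
    with y' hy'
  have h1 : |φ y' - φ y - L (y' - y)| ≤ max C 0 * ‖y' - y‖ ^ 2 :=
    le_trans (h y') (mul_le_mul_of_nonneg_right (le_max_left C 0) (sq_nonneg _))
  have h2 : ‖y' - y‖ < c / (max C 0 + 1) := by rwa [mem_ball, dist_eq_norm] at hy'
  have hdc : c / (max C 0 + 1) * (max C 0 + 1) = c := div_mul_cancel₀ c (by positivity)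
  rw [Real.norm_eq_abs]
  have hn0 : (0:ℝ) ≤ ‖y' - y‖ := norm_nonneg _
  have hd0 : (0:ℝ) < c / (max C 0 + 1) := by positivity
  have hcn : c * ‖y' - y‖ = (c / (max C 0 + 1)) * (max C 0 + 1) * ‖y' - y‖ := by rw [hdc]
  nlinarith [h1, mul_nonneg (mul_nonneg hM hn0) (sub_nonneg.2 h2.le),
    mul_nonneg hd0.le hn0, hcn]

/-- upper bound on the Moreau envelope -/
lemma env_upper (hf : ConvexOn ℝ Set.univ f) (y y' : V) :
    f (prox f hf 1 one_pos y') + ‖prox f hf 1 one_pos y' - y'‖ ^ 2 / 2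
      ≤ f (prox f hf 1 one_pos y) + ‖prox f hf 1 one_pos y - y‖ ^ 2 / 2
        + ⟪y - prox f hf 1 one_pos y, y' - y⟫ + ‖y' - y‖ ^ 2 / 2 := by
  have h := prox_min f hf 1 one_pos y' (prox f hf 1 one_pos y)
  simp only [one_mul] at h
  have e : prox f hf 1 one_pos y - y' = (prox f hf 1 one_pos y - y) - (y' - y) := by abel
  have hexp : ‖prox f hf 1 one_pos y - y'‖ ^ 2 = ‖prox f hf 1 one_pos y - y‖ ^ 2
      - 2 * ⟪prox f hf 1 one_pos y - y, y' - y⟫ + ‖y' - y‖ ^ 2 := by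
    rw [e, norm_sub_sq_real]
  have hswap : ⟪y - prox f hf 1 one_pos y, y' - y⟫
      = -⟪prox f hf 1 one_pos y - y, y' - y⟫ := by
    rw [← neg_sub (prox f hf 1 one_pos y) y, inner_neg_left]
  rw [hexp] at h
  rw [hswap]
  linarith

/-- potential whose gradient is the proximal map -/
def pot (hf : ConvexOn ℝ Set.univ f) (y : V) : ℝ :=
  ‖y‖ ^ 2 / 2 - (f (prox f hf 1 one_pos y) + ‖prox f hf 1 one_pos y - y‖ ^ 2 / 2)

lemma pot_deriv (hf : ConvexOn ℝ Set.univ f) (y : V) :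
    HasFDerivAt (pot f hf) (innerSL ℝ (prox f hf 1 one_pos y)) y := by
  apply hasFDerivAt_of_quad (C := 3)
  intro y'
  have hupper := env_upper f hf y y'
  have hlower := env_upper f hf y' y
  set P := prox f hf 1 one_pos with hP
  simp only [pot]
  have happ : (innerSL ℝ (P y)) (y' - y) = ⟪P y, y' - y⟫ := rfl
  rw [happ]
  have hyy : ‖y'‖ ^ 2 = ‖y‖ ^ 2 + 2 * ⟪y, y' - y⟫ + ‖y' - y‖ ^ 2 := by
    have e : y' = y + (y' - y) := by abel
    nth_rewrite 1 [e]
    rw [norm_add_sq_real]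
  have hPsplit : ⟪P y, y' - y⟫ = ⟪y, y' - y⟫ - ⟪y - P y, y' - y⟫ := by
    rw [inner_sub_left]; ring
  have hlip : ‖P y' - P y‖ ≤ ‖y' - y‖ := by
    have h := (prox_lip f hf 1 one_pos).dist_le_mul y' y
    rwa [dist_eq_norm, dist_eq_norm, NNReal.coe_one, one_mul] at h
  have hsplit2 : ⟪y' - P y', y' - y⟫
      = ⟪y - P y, y' - y⟫ + ⟪(y' - y) - (P y' - P y), y' - y⟫ := by
    rw [← inner_add_left]
    congr 1
    abel
  have habs : |⟪(y' - y) - (P y' - P y), y' - y⟫| ≤ 2 * ‖y' - y‖ ^ 2 := by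
    have h1 := abs_real_inner_le_norm ((y' - y) - (P y' - P y)) (y' - y)
    have h2 : ‖(y' - y) - (P y' - P y)‖ ≤ 2 * ‖y' - y‖ := by
      have h3 := norm_sub_le (y' - y) (P y' - P y)
      linarith
    nlinarith [norm_nonneg (y' - y), abs_nonneg ⟪(y' - y) - (P y' - P y), y' - y⟫,
      norm_nonneg ((y' - y) - (P y' - P y))]
  have hrev : ‖y - y'‖ = ‖y' - y‖ := norm_sub_rev _ _
  have hneg : ⟪y' - P y', y - y'⟫ = -⟪y' - P y', y' - y⟫ := by
    rw [← neg_sub y' y, inner_neg_right]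
  rw [hneg, hrev, hsplit2] at hlower
  have habs' := abs_le.1 habs
  rw [abs_le]
  constructor
  · nlinarith [hupper, hlower, habs'.1, habs'.2, hyy, hPsplit, sq_nonneg ‖y' - y‖]
  · nlinarith [hupper, hlower, habs'.1, habs'.2, hyy, hPsplit, sq_nonneg ‖y' - y‖]

/-- symmetry of the derivative of the proximal map -/
lemma prox_deriv_symm (hf : ConvexOn ℝ Set.univ f) {y : V} {D : V →L[ℝ] V} (hd : HasFDerivAt (prox f hf 1 one_pos) D y) :
    ∀ v w, ⟪D v, w⟫ = ⟪D w, v⟫ := by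
  intro v w
  have hψ : ∀ u, HasFDerivAt (pot f hf) (innerSL ℝ (prox f hf 1 one_pos u)) u :=
    pot_deriv f hf
  have h2 : HasFDerivAt (fun u => innerSL ℝ (prox f hf 1 one_pos u))
      ((innerSL ℝ).comp D) y :=
    (innerSL ℝ (E := V)).hasFDerivAt.comp y hd
  have h3 := second_derivative_symmetric_of_eventually
    (Filter.Eventually.of_forall hψ) h2 v w
  simpa using h3

/-- the quantitative upper semicontinuity of subgradients at a differentiability point -/
lemma subgrad_usc (hf : ConvexOn ℝ Set.univ f) {x p : V} (hd : HasFDerivAt f (innerSL ℝ p) x) :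
    ∀ ε > 0, ∃ δ > 0, ∀ z g, IsSubgrad f z g → ‖z - x‖ < δ → ‖g - p‖ ≤ ε := by
  intro ε hε
  have hlittle := hasFDerivAt_iff_isLittleO.1 hd
  rw [Asymptotics.isLittleO_iff] at hlittle
  have h1 := hlittle (show (0:ℝ) < ε/4 by positivity)
  rw [Metric.eventually_nhds_iff] at h1
  obtain ⟨ρ, hρ, hmod⟩ := h1
  refine ⟨ρ/2, by positivity, fun z g hg hz => ?_⟩
  have hxlow : f x + ⟪p, z - x⟫ ≤ f z := grad_subgrad f hf hd z
  rcases eq_or_ne g p with h | hne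
  · rw [h]; simpa using hε.le
  set u := (ρ/2 / ‖g - p‖) • (g - p) with hu
  have hgp : 0 < ‖g - p‖ := norm_pos_iff.2 (sub_ne_zero.2 hne)
  have hun : ‖u‖ = ρ/2 := by
    rw [hu, norm_smul, Real.norm_eq_abs, abs_of_pos (by positivity),
      div_mul_cancel₀ _ hgp.ne']
  have hsub' : f z + ⟪g, u⟫ ≤ f (z + u) := by
    have h := hg (z + u)
    have e : z + u - z = u := by abel
    rwa [e] at h
  have hnear : dist (z + u) x < ρ := by
    rw [dist_eq_norm]
    have e : z + u - x = (z - x) + u := by abel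
    rw [e]
    calc ‖(z - x) + u‖ ≤ ‖z - x‖ + ‖u‖ := norm_add_le _ _
      _ < ρ/2 + ρ/2 := by rw [hun]; linarith
      _ = ρ := by ring
  have hup := hmod hnear
  rw [Real.norm_eq_abs] at hup
  have hupabs := (abs_le.1 hup).2
  have hzux : ‖z + u - x‖ ≤ ρ := by
    rw [dist_eq_norm] at hnear
    exact hnear.le
  have hpzux : (innerSL ℝ p) (z + u - x) = ⟪p, z - x⟫ + ⟪p, u⟫ := by
    have e : z + u - x = (z - x) + u := by abel
    show ⟪p, z + u - x⟫ = _
    rw [e, inner_add_right]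
  have hginner : ⟪g - p, u⟫ = ρ/2 * ‖g - p‖ := by
    rw [hu, real_inner_smul_right, real_inner_self_eq_norm_sq]
    field_simp
  have hsplit : ⟪g, u⟫ = ⟪p, u⟫ + ⟪g - p, u⟫ := by
    rw [inner_sub_left]; ring
  have hmul : ε/4 * ‖z + u - x‖ ≤ ε/4 * ρ :=
    mul_le_mul_of_nonneg_left hzux (by positivity)
  have hfinal : ρ/2 * ‖g - p‖ ≤ ε/4 * ρ := by
    rw [hpzux] at hupabs
    linarith [hsub', hxlow, hmul, hsplit, hginner]
  have : ‖g - p‖ ≤ ε/2 := by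
    have hhalf : (0:ℝ) < ρ/2 := by positivity
    nlinarith [hfinal]
  linarith

/-- the key estimate: first-order expansion of the subdifferential at good points -/
lemma subdiff_expansion [Nontrivial V] (hf : ConvexOn ℝ Set.univ f) {x p y : V} (hd : HasFDerivAt f (innerSL ℝ p) x)
    (hy : y = x + p) (hP : DifferentiableAt ℝ (prox f hf 1 one_pos) y)
    (hdet : (fderiv ℝ (prox f hf 1 one_pos) y).det ≠ 0) :
    ∃ A : V →ₗ[ℝ] V, LinearMap.IsSymmetric A ∧
      ∀ ε > 0, ∃ δ > 0, ∀ z g, IsSubgrad f z g → ‖z - x‖ < δ →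
        ‖g - p - A (z - x)‖ ≤ ε * ‖z - x‖ := by
  set P := prox f hf 1 one_pos with hPdef
  set D : V →L[ℝ] V := fderiv ℝ P y with hD
  have hDf : HasFDerivAt P D y := hP.hasFDerivAt
  have hsymmD : ∀ v w, ⟪D v, w⟫ = ⟪D w, v⟫ := prox_deriv_symm f hf hDf
  have hdet' : LinearMap.det (D : V →ₗ[ℝ] V) ≠ 0 := hdet
  set Deq := LinearMap.equivOfDetNeZero (D : V →ₗ[ℝ] V) hdet' with hDeq
  have hDeqapp : ∀ v, Deq v = D v := fun v => by
    rw [hDeq]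
    simp [LinearMap.equivOfDetNeZero]
  set Binv : V →L[ℝ] V := LinearMap.toContinuousLinearMap (Deq.symm : V →ₗ[ℝ] V) with hBinv
  have hBinvapp : ∀ v, Binv v = Deq.symm v := fun v => by
    rw [hBinv]; simp
  have hBD : ∀ v, Binv (D v) = v := fun v => by
    rw [hBinvapp, ← hDeqapp, LinearEquiv.symm_apply_apply]
  set A : V →ₗ[ℝ] V := (Binv : V →ₗ[ℝ] V) - LinearMap.id with hA
  have hAapp : ∀ v, A v = Binv v - v := fun v => by
    rw [hA]; simp
  have hDB : ∀ v, D (Binv v) = v := fun v => by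
    rw [hBinvapp, ← hDeqapp, LinearEquiv.apply_symm_apply]
  have hBsymm : ∀ u v, ⟪Binv u, v⟫ = ⟪u, Binv v⟫ := by
    intro u v
    calc ⟪Binv u, v⟫ = ⟪Binv u, D (Binv v)⟫ := by rw [hDB]
      _ = ⟪D (Binv v), Binv u⟫ := real_inner_comm _ _
      _ = ⟪D (Binv u), Binv v⟫ := hsymmD (Binv v) (Binv u)
      _ = ⟪u, Binv v⟫ := by rw [hDB]
  have hAsymm : LinearMap.IsSymmetric A := by
    intro u v
    rw [hAapp, hAapp, inner_sub_left, inner_sub_right, hBsymm]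
  refine ⟨A, hAsymm, ?_⟩
  intro ε hε
  set CB : ℝ := ‖Binv‖ + 1 with hCB
  have hCB0 : (0:ℝ) < CB := by positivity
  set ε1 : ℝ := min (1/(2*CB)) (ε/(2*CB*CB)) with hε1
  have hε10 : 0 < ε1 := lt_min (by positivity) (by positivity)
  have hPlittle := hasFDerivAt_iff_isLittleO.1 hDf
  rw [Asymptotics.isLittleO_iff] at hPlittle
  have h1 := hPlittle hε10
  rw [Metric.eventually_nhds_iff] at h1
  obtain ⟨δ1, hδ10, hPmod⟩ := h1
  obtain ⟨δ2, hδ20, husc⟩ := subgrad_usc f hf hd (δ1/4) (by positivity)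
  refine ⟨min δ2 (δ1/4), lt_min hδ20 (by positivity), fun z g hg hz => ?_⟩
  have hPw : P (z + g) = z := by
    have h := subgrad_prox f hf one_pos hg
    rw [hPdef]
    simpa using h
  have hPy : P y = x := by
    have h := subgrad_prox f hf one_pos (grad_subgrad f hf hd)
    rw [hPdef, hy]
    simpa using h
  have hgp : ‖g - p‖ ≤ δ1/4 := husc z g hg (lt_of_lt_of_le hz (min_le_left _ _))
  have hwy : ‖(z + g) - y‖ ≤ ‖z - x‖ + ‖g - p‖ := by
    have e : (z + g) - y = (z - x) + (g - p) := by rw [hy]; abel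
    rw [e]; exact norm_add_le _ _
  have hzx4 : ‖z - x‖ < δ1/4 := lt_of_lt_of_le hz (min_le_right _ _)
  have hwy1 : ‖(z + g) - y‖ < δ1 := by linarith [hwy, hgp, hδ10]
  have hmod := hPmod (show dist (z + g) y < δ1 by rwa [dist_eq_norm])
  rw [hPw, hPy] at hmod
  -- hmod : ‖z - x - D ((z + g) - y)‖ ≤ ε1 * ‖(z + g) - y‖
  have hanti : ∀ v, ‖v‖ ≤ CB * ‖D v‖ := by
    intro v
    calc ‖v‖ = ‖Binv (D v)‖ := by rw [hBD]
      _ ≤ ‖Binv‖ * ‖D v‖ := Binv.le_opNorm _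
      _ ≤ CB * ‖D v‖ := by
          apply mul_le_mul_of_nonneg_right _ (norm_nonneg _)
          rw [hCB]; linarith
  have hDwy : ‖D ((z + g) - y)‖ ≤ ‖z - x‖ + ε1 * ‖(z + g) - y‖ := by
    have e : D ((z + g) - y) = (z - x) - ((z - x) - D ((z + g) - y)) := by abel
    rw [e]
    calc ‖(z - x) - ((z - x) - D ((z + g) - y))‖
        ≤ ‖z - x‖ + ‖(z - x) - D ((z + g) - y)‖ := norm_sub_le _ _
      _ ≤ ‖z - x‖ + ε1 * ‖(z + g) - y‖ := by linarith [hmod]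
  have hCBe : CB * ε1 ≤ 1/2 := by
    have h := min_le_left (1/(2*CB)) (ε/(2*CB*CB))
    calc CB * ε1 ≤ CB * (1/(2*CB)) := mul_le_mul_of_nonneg_left h hCB0.le
      _ = 1/2 := by field_simp
  have hwy2 : ‖(z + g) - y‖ ≤ 2 * CB * ‖z - x‖ := by
    have h := hanti ((z + g) - y)
    have h2 := mul_le_mul_of_nonneg_left hDwy hCB0.le
    nlinarith [norm_nonneg ((z + g) - y), norm_nonneg (z - x),
      mul_le_mul_of_nonneg_right hCBe (norm_nonneg ((z + g) - y))]
  have hkey : g - p - A (z - x) = -(Binv ((z - x) - D ((z + g) - y))) := by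
    have e1 : Binv ((z - x) - D ((z + g) - y)) = Binv (z - x) - ((z + g) - y) := by
      rw [map_sub, hBD]
    rw [e1, hAapp, hy]
    abel
  rw [hkey, norm_neg]
  have hε1b : ε1 ≤ ε/(2*CB*CB) := min_le_right _ _
  calc ‖Binv ((z - x) - D ((z + g) - y))‖
      ≤ ‖Binv‖ * ‖(z - x) - D ((z + g) - y)‖ := Binv.le_opNorm _
    _ ≤ CB * ‖(z - x) - D ((z + g) - y)‖ := by
        apply mul_le_mul_of_nonneg_right _ (norm_nonneg _)
        rw [hCB]; linarith
    _ ≤ CB * (ε1 * ‖(z + g) - y‖) := by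
        apply mul_le_mul_of_nonneg_left _ hCB0.le
        exact hmod
    _ ≤ CB * (ε1 * (2 * CB * ‖z - x‖)) := by
        apply mul_le_mul_of_nonneg_left _ hCB0.le
        exact mul_le_mul_of_nonneg_left hwy2 hε10.le
    _ ≤ ε * ‖z - x‖ := by
        have hn : (0:ℝ) ≤ ‖z - x‖ := norm_nonneg _
        have h := mul_le_mul_of_nonneg_right hε1b (by positivity : (0:ℝ) ≤ 2 * CB * CB * ‖z - x‖)
        calc CB * (ε1 * (2 * CB * ‖z - x‖)) = ε1 * (2 * CB * CB * ‖z - x‖) := by ring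
          _ ≤ ε/(2*CB*CB) * (2 * CB * CB * ‖z - x‖) := h
          _ = ε * ‖z - x‖ := by field_simp

set_option maxHeartbeats 2000000 in
/-- assembly: second-order expansion from first-order expansion of the subdifferential -/
lemma assembly (hf : ConvexOn ℝ Set.univ f) {x p : V} (A : V →ₗ[ℝ] V)
    (hexp : ∀ ε > 0, ∃ δ > 0, ∀ z g, IsSubgrad f z g → ‖z - x‖ < δ →
        ‖g - p - A (z - x)‖ ≤ ε * ‖z - x‖) :
    (fun h : V => f (x + h) - f x - ⟪p, h⟫ - (1 / 2) * ⟪A h, h⟫)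
      =o[𝓝 (0 : V)] fun h => ‖h‖ ^ 2 := by
  have gauss : ∀ m : ℕ, ∑ j ∈ Finset.range m, (j:ℝ) = m*(m-1)/2 := by
    intro m
    induction m with
    | zero => simp
    | succ n ih =>
      rw [Finset.sum_range_succ, ih]
      push_cast
      ring
  rw [Asymptotics.isLittleO_iff]
  intro c hc
  obtain ⟨δ, hδ0, hδ⟩ := hexp (c/2) (by positivity)
  filter_upwards [Metric.ball_mem_nhds (0:V) hδ0] with h hball
  have hh : ‖h‖ < δ := by rwa [mem_ball, dist_zero_right] at hball
  set q : ℝ := ⟪A h, h⟫ with hq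
  set X : ℝ := f (x + h) - f x - ⟪p, h⟫ - (1/2) * q with hX
  -- choose subgradients along the segment
  have hgg : ∀ t : ℝ, ∃ g, IsSubgrad f (x + t • h) g := fun t =>
    exists_subgrad f hf (x + t • h)
  choose gg hggs using hgg
  -- the basic inner-product estimate at parameters t ∈ [0,1]
  have hest : ∀ t : ℝ, 0 ≤ t → t ≤ 1 →
      |⟪gg t, h⟫ - ⟪p, h⟫ - t * q| ≤ (c/2) * ‖h‖^2 := by
    intro t ht0 ht1
    have hnear : ‖(x + t • h) - x‖ < δ := by
      have e : (x + t • h) - x = t • h := by abel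
      rw [e, norm_smul, Real.norm_eq_abs, abs_of_nonneg ht0]
      calc t * ‖h‖ ≤ 1 * ‖h‖ := mul_le_mul_of_nonneg_right ht1 (norm_nonneg _)
        _ = ‖h‖ := one_mul _
        _ < δ := hh
    have hbound := hδ _ (gg t) (hggs t) hnear
    have e : (x + t • h) - x = t • h := by abel
    rw [e] at hbound
    -- hbound : ‖gg t - p - A (t • h)‖ ≤ c/2 * ‖t • h‖
    have h2 : ⟪gg t - p - A (t • h), h⟫ = ⟪gg t, h⟫ - ⟪p, h⟫ - t * q := by
      rw [inner_sub_left, inner_sub_left, A.map_smul, real_inner_smul_left, ← hq]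
    have h3 := abs_real_inner_le_norm (gg t - p - A (t • h)) h
    rw [h2] at h3
    have h4 : ‖gg t - p - A (t • h)‖ * ‖h‖ ≤ (c/2 * ‖t • h‖) * ‖h‖ :=
      mul_le_mul_of_nonneg_right hbound (norm_nonneg h)
    have h5 : ‖t • h‖ ≤ ‖h‖ := by
      rw [norm_smul, Real.norm_eq_abs, abs_of_nonneg ht0]
      calc t * ‖h‖ ≤ 1 * ‖h‖ := mul_le_mul_of_nonneg_right ht1 (norm_nonneg _)
        _ = ‖h‖ := one_mul _
    calc |⟪gg t, h⟫ - ⟪p, h⟫ - t * q| ≤ ‖gg t - p - A (t • h)‖ * ‖h‖ := h3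
      _ ≤ (c/2 * ‖t • h‖) * ‖h‖ := h4
      _ ≤ (c/2) * ‖h‖^2 := by
          nlinarith [mul_le_mul_of_nonneg_left (mul_le_mul_of_nonneg_right h5 (norm_nonneg h))
            (by positivity : (0:ℝ) ≤ c/2)]
  -- the two-sided claim for every m ≥ 1
  have claim : ∀ m : ℕ, 1 ≤ m → |X| ≤ |q|/(2*m) + (c/2) * ‖h‖^2 := by
    intro m hm
    have hm0 : (0:ℝ) < m := by exact_mod_cast hm
    set F : ℕ → ℝ := fun j => f (x + ((j:ℝ)/(m:ℝ)) • h) with hF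
    have htel : ∑ j ∈ Finset.range m, (F (j+1) - F j) = f (x + h) - f x := by
      rw [Finset.sum_range_sub F m]
      have e1 : F m = f (x + h) := by
        rw [hF]
        simp only []
        rw [div_self hm0.ne', one_smul]
      have e2 : F 0 = f x := by
        rw [hF]
        norm_num
      rw [e1, e2]
    have hstep : ∀ j : ℕ, (x + (((j:ℝ)+1)/(m:ℝ)) • h) - (x + ((j:ℝ)/(m:ℝ)) • h)
        = (1/(m:ℝ)) • h := by
      intro j
      have e : (((j:ℝ)+1)/(m:ℝ)) • h - ((j:ℝ)/(m:ℝ)) • h = (1/(m:ℝ)) • h := by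
        rw [← sub_smul]
        congr 1
        field_simp
        ring
      calc (x + (((j:ℝ)+1)/(m:ℝ)) • h) - (x + ((j:ℝ)/(m:ℝ)) • h)
          = (((j:ℝ)+1)/(m:ℝ)) • h - ((j:ℝ)/(m:ℝ)) • h := by abel
        _ = (1/(m:ℝ)) • h := e
    have hcast : ∀ j : ℕ, ((j+1 : ℕ):ℝ) = (j:ℝ)+1 := fun j => by push_cast; ring
    -- lower bound terms
    have hlowterm : ∀ j ∈ Finset.range m,
        (1/(m:ℝ)) * (⟪p, h⟫ + ((j:ℝ)/m) * q - (c/2) * ‖h‖^2) ≤ F (j+1) - F j := by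
      intro j hj
      have hjm : (j:ℝ)/m ≤ 1 := by
        rw [div_le_one hm0]
        exact_mod_cast le_of_lt (Finset.mem_range.1 hj)
      have hjm0 : (0:ℝ) ≤ (j:ℝ)/m := by positivity
      have hsubg := hggs ((j:ℝ)/m) (x + (((j:ℝ)+1)/(m:ℝ)) • h)
      rw [hstep j, real_inner_smul_right] at hsubg
      have habs := (abs_le.1 (hest ((j:ℝ)/m) hjm0 hjm)).1
      have hFj1 : F (j+1) = f (x + (((j:ℝ)+1)/(m:ℝ)) • h) := by
        rw [hF]
        simp only []
        rw [hcast j]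
      have hFj : F j = f (x + ((j:ℝ)/(m:ℝ)) • h) := rfl
      rw [hFj1, hFj]
      have hmul := mul_le_mul_of_nonneg_left
        (by linarith [habs] : ⟪p, h⟫ + ((j:ℝ)/m) * q - (c/2) * ‖h‖^2 ≤ ⟪gg ((j:ℝ)/m), h⟫)
        (by positivity : (0:ℝ) ≤ 1/(m:ℝ))
      linarith [hsubg, hmul]
    -- upper bound terms
    have hupterm : ∀ j ∈ Finset.range m,
        F (j+1) - F j ≤ (1/(m:ℝ)) * (⟪p, h⟫ + (((j:ℝ)+1)/m) * q + (c/2) * ‖h‖^2) := by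
      intro j hj
      have hjm : ((j:ℝ)+1)/m ≤ 1 := by
        rw [div_le_one hm0]
        have := Finset.mem_range.1 hj
        exact_mod_cast Nat.succ_le_of_lt this
      have hjm0 : (0:ℝ) ≤ ((j:ℝ)+1)/m := by positivity
      have hsubg := hggs (((j:ℝ)+1)/m) (x + ((j:ℝ)/(m:ℝ)) • h)
      have hstep' : (x + ((j:ℝ)/(m:ℝ)) • h) - (x + (((j:ℝ)+1)/(m:ℝ)) • h)
          = -((1/(m:ℝ)) • h) := by
        rw [← hstep j]; abel
      rw [hstep', inner_neg_right, real_inner_smul_right] at hsubg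
      have habs := (abs_le.1 (hest (((j:ℝ)+1)/m) hjm0 hjm)).2
      have hFj1 : F (j+1) = f (x + (((j:ℝ)+1)/(m:ℝ)) • h) := by
        rw [hF]
        simp only []
        rw [hcast j]
      have hFj : F j = f (x + ((j:ℝ)/(m:ℝ)) • h) := rfl
      rw [hFj1, hFj]
      have hmul := mul_le_mul_of_nonneg_left
        (by linarith [habs] : ⟪gg (((j:ℝ)+1)/m), h⟫ ≤ ⟪p, h⟫ + (((j:ℝ)+1)/m) * q + (c/2) * ‖h‖^2)
        (by positivity : (0:ℝ) ≤ 1/(m:ℝ))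
      linarith [hsubg, hmul]
    -- sum the bounds
    have hsumlow := Finset.sum_le_sum hlowterm
    have hsumup := Finset.sum_le_sum hupterm
    rw [htel] at hsumlow hsumup
    have hsum1 : ∑ j ∈ Finset.range m, (1/(m:ℝ)) * (⟪p, h⟫ + ((j:ℝ)/m) * q - (c/2) * ‖h‖^2)
        = ⟪p, h⟫ + ((m:ℝ)-1)/(2*m) * q - (c/2) * ‖h‖^2 := by
      calc ∑ j ∈ Finset.range m, (1/(m:ℝ)) * (⟪p, h⟫ + ((j:ℝ)/m) * q - (c/2) * ‖h‖^2)
          = ∑ j ∈ Finset.range m,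
              ((j:ℝ) * (q/((m:ℝ)*m)) + (1/(m:ℝ)) * (⟪p, h⟫ - (c/2) * ‖h‖^2)) :=
            Finset.sum_congr rfl (fun j _ => by ring)
        _ = (∑ j ∈ Finset.range m, (j:ℝ)) * (q/((m:ℝ)*m))
              + (m:ℝ) * ((1/(m:ℝ)) * (⟪p, h⟫ - (c/2) * ‖h‖^2)) := by
            rw [Finset.sum_add_distrib, ← Finset.sum_mul, Finset.sum_const,
              Finset.card_range, nsmul_eq_mul]
        _ = ⟪p, h⟫ + ((m:ℝ)-1)/(2*m) * q - (c/2) * ‖h‖^2 := by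
            rw [gauss m]
            field_simp
            ring
    have hsum2 : ∑ j ∈ Finset.range m,
        (1/(m:ℝ)) * (⟪p, h⟫ + (((j:ℝ)+1)/m) * q + (c/2) * ‖h‖^2)
        = ⟪p, h⟫ + ((m:ℝ)+1)/(2*m) * q + (c/2) * ‖h‖^2 := by
      calc ∑ j ∈ Finset.range m, (1/(m:ℝ)) * (⟪p, h⟫ + (((j:ℝ)+1)/m) * q + (c/2) * ‖h‖^2)
          = ∑ j ∈ Finset.range m,
              ((j:ℝ) * (q/((m:ℝ)*m)) + (1/(m:ℝ)) * (⟪p, h⟫ + (c/2) * ‖h‖^2 + q/m)) :=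
            Finset.sum_congr rfl (fun j _ => by field_simp; ring)
        _ = (∑ j ∈ Finset.range m, (j:ℝ)) * (q/((m:ℝ)*m))
              + (m:ℝ) * ((1/(m:ℝ)) * (⟪p, h⟫ + (c/2) * ‖h‖^2 + q/m)) := by
            rw [Finset.sum_add_distrib, ← Finset.sum_mul, Finset.sum_const,
              Finset.card_range, nsmul_eq_mul]
        _ = ⟪p, h⟫ + ((m:ℝ)+1)/(2*m) * q + (c/2) * ‖h‖^2 := by
            rw [gauss m]
            field_simp
            ring
    rw [hsum1] at hsumlow
    rw [hsum2] at hsumup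
    have hqm : q/(2*(m:ℝ)) ≤ |q|/(2*m) := by
      gcongr
      exact le_abs_self q
    have hqm' : -(|q|/(2*(m:ℝ))) ≤ -(q/(2*m)) := neg_le_neg hqm
    have hlow2 : ((m:ℝ)-1)/(2*m) * q - (1/2) * q = -(q/(2*m)) := by
      field_simp
      ring
    have hup2 : ((m:ℝ)+1)/(2*m) * q - (1/2) * q = q/(2*m) := by
      field_simp
      ring
    rw [abs_le]
    constructor
    · have : -(q/(2*(m:ℝ))) - (c/2) * ‖h‖^2 ≤ X := by
        rw [hX]
        linarith [hsumlow, hlow2]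
      linarith [hqm', this]
    · have : X ≤ q/(2*(m:ℝ)) + (c/2) * ‖h‖^2 := by
        rw [hX]
        linarith [hsumup, hup2]
      linarith [hqm, this]
  -- let m → ∞
  have hfin : |X| ≤ (c/2) * ‖h‖^2 := by
    apply le_of_forall_pos_le_add
    intro η hη
    obtain ⟨m, hm⟩ := exists_nat_gt (max (|q|/(2*η)) 1)
    have hm1r : (1:ℝ) ≤ m := le_of_lt (lt_of_le_of_lt (le_max_right _ _) hm)
    have hm1 : 1 ≤ m := by exact_mod_cast hm1r
    have hm0 : (0:ℝ) < m := by linarith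
    have hqq : |q|/(2*η) < m := lt_of_le_of_lt (le_max_left _ _) hm
    have hqm : |q|/(2*(m:ℝ)) < η := by
      rw [div_lt_iff₀ (by positivity)] at hqq ⊢
      nlinarith [abs_nonneg q, hη]
    have := claim m hm1
    linarith
  rw [Real.norm_eq_abs, Real.norm_eq_abs, abs_of_nonneg (sq_nonneg ‖h‖)]
  have : |X| = |f (x + h) - f x - ⟪p, h⟫ - (1/2) * ⟪A h, h⟫| := by rw [hX, hq]
  nlinarith [hfin, sq_nonneg ‖h‖, hc.le, this.ge, this.le]

end Convex

end Alex

namespace Alex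

/-- Lipschitz images of null sets are null. -/
lemma lipschitz_image_null {n : ℕ} (g : E n → E n) (K : NNReal) (hg : LipschitzWith K g)
    {s : Set (E n)} (hs : volume s = 0) : volume (g '' s) = 0 := by
  have hfinrank : ((n:ℝ)) = (Module.finrank ℝ (E n) : ℝ) := by
    rw [finrank_euclideanSpace_fin]
  haveI hH : (μH[(n:ℝ)] : Measure (E n)).IsAddHaarMeasure := by
    rw [hfinrank]
    infer_instance
  have h1 : (μH[(n:ℝ)] : Measure (E n)) s = 0 := by
    have heq := MeasureTheory.Measure.isAddLeftInvariant_eq_smul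
      (μH[(n:ℝ)] : Measure (E n)) (volume : Measure (E n))
    rw [heq]
    simp [hs]
  have h2 : (μH[(n:ℝ)] : Measure (E n)) (g '' s) = 0 := by
    have hle := hg.hausdorffMeasure_image_le (by positivity : (0:ℝ) ≤ (n:ℝ)) s
    rw [h1, mul_zero] at hle
    exact le_antisymm hle zero_le
  have h3 := MeasureTheory.Measure.isAddLeftInvariant_eq_smul
    (volume : Measure (E n)) (μH[(n:ℝ)] : Measure (E n))
  rw [h3]
  simp [h2]

/-- Rademacher for locally Lipschitz convex functions on ℝⁿ. -/
lemma ae_diff {n : ℕ} (f : E n → ℝ) (hf : ConvexOn ℝ Set.univ f) :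
    ∀ᵐ x ∂(volume : Measure (E n)), DifferentiableAt ℝ f x := by
  have hcov : ∀ k : ℕ, ∀ᵐ x ∂(volume : Measure (E n)),
      x ∈ ball (0 : E n) k → DifferentiableAt ℝ f x := by
    intro k
    have hconv : ConvexOn ℝ (ball (0 : E n) (k+1)) f :=
      hf.subset (Set.subset_univ _) (convex_ball _ _)
    have hbd : Bornology.IsBounded (f '' ball (0 : E n) (k+1)) := by
      have hc : IsCompact (f '' closedBall (0 : E n) (k+1)) :=
        (isCompact_closedBall _ _).image (cont f hf)
      exact hc.isBounded.subset (Set.image_mono ball_subset_closedBall)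
    obtain ⟨K, hK⟩ := hconv.exists_lipschitzOnWith_of_isBounded
      (by linarith [Nat.cast_nonneg (α := ℝ) k] : (k:ℝ) < k+1) hbd
    have hae := hK.ae_differentiableWithinAt_of_mem (μ := volume)
    filter_upwards [hae] with x hx hmem
    exact (hx hmem).differentiableAt (isOpen_ball.mem_nhds hmem)
  have hall := (MeasureTheory.ae_all_iff).2 hcov
  filter_upwards [hall] with x hx
  obtain ⟨k, hk⟩ := exists_nat_gt ‖x‖
  exact hx k (by rwa [mem_ball, dist_zero_right])

end Alex

/-- Alexandrov's theorem: a convex function on ℝ^n admits, at Lebesgue-almost every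
point, a second-order Taylor expansion with a symmetric second-order term. -/
theorem alexandrov (n : ℕ) (hn : 1 ≤ n) (f : E n → ℝ)
    (hf : ConvexOn ℝ Set.univ f) :
    ∀ᵐ x ∂(volume : Measure (E n)), ∃ (p : E n) (A : E n →ₗ[ℝ] E n),
      A.IsSymmetric ∧
      (fun h : E n => f (x + h) - f x - ⟪p, h⟫ - (1 / 2) * ⟪A h, h⟫)
        =o[𝓝 (0 : E n)] fun h => ‖h‖ ^ 2 := by
  classical
  haveI : Nontrivial (E n) := by
    apply Module.nontrivial_of_finrank_pos (R := ℝ)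
    rw [finrank_euclideanSpace_fin]
    omega
  set P := Alex.prox f hf 1 one_pos with hP
  have hlip := Alex.prox_lip f hf 1 one_pos
  set N : Set (E n) := {y | ¬ DifferentiableAt ℝ P y} with hN
  have hNnull : volume N = 0 := by
    have hae := hlip.ae_differentiableAt (μ := volume)
    rw [MeasureTheory.ae_iff] at hae
    rw [hN]
    exact hae
  set Z : Set (E n) := {y | DifferentiableAt ℝ P y ∧ (fderiv ℝ P y).det = 0} with hZ
  have hZnull : volume (P '' Z) = 0 := by
    apply MeasureTheory.addHaar_image_eq_zero_of_det_fderivWithin_eq_zero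
      (volume : Measure (E n)) (f' := fun y => fderiv ℝ P y)
    · exact fun y hy => (hy.1.hasFDerivAt).hasFDerivWithinAt
    · exact fun y hy => hy.2
  have hPNnull : volume (P '' N) = 0 := Alex.lipschitz_image_null P 1 hlip hNnull
  have hfdiff := Alex.ae_diff f hf
  have hbad : volume (P '' N ∪ P '' Z) = 0 := measure_union_null hPNnull hZnull
  have hbadae : ∀ᵐ x ∂(volume : Measure (E n)), x ∉ P '' N ∪ P '' Z :=
    MeasureTheory.measure_eq_zero_iff_ae_notMem.1 hbad
  filter_upwards [hfdiff, hbadae] with x hx hxgood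
  set p : E n := (InnerProductSpace.toDual ℝ (E n)).symm (fderiv ℝ f x) with hp
  have hdd : HasFDerivAt f (innerSL ℝ p) x := by
    have h1 := hx.hasFDerivAt
    have h2 : innerSL ℝ p = fderiv ℝ f x := by
      ext v
      show ⟪p, v⟫ = (fderiv ℝ f x) v
      rw [hp]
      exact InnerProductSpace.toDual_symm_apply
    rwa [h2]
  set y := x + p with hy
  have hPy : P y = x := by
    have h := Alex.subgrad_prox f hf one_pos (Alex.grad_subgrad f hf hdd)
    rw [hy, hP]
    simpa using h
  have hyN : y ∉ N := fun hmem => hxgood (Or.inl ⟨y, hmem, hPy⟩)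
  have hydiff : DifferentiableAt ℝ P y := by
    by_contra hcon
    exact hyN hcon
  have hydet : (fderiv ℝ P y).det ≠ 0 := fun h0 =>
    hxgood (Or.inr ⟨y, ⟨hydiff, h0⟩, hPy⟩)
  obtain ⟨A, hAsymm, hexp⟩ := Alex.subdiff_expansion f hf hdd hy hydiff hydet
  exact ⟨p, A, hAsymm, Alex.assembly f hf A hexp⟩
end
end
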